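/- Nonpositive pairwise covariances in DBsample: under the DBsample process with p ∈ (0,1) and 0 < α ≤ min((1-p)/p, p/(1-p)) (so each z_k has marginal Bernoulli(p)), Cov(z_k, z_ℓ) ≤ 0 for all k ≠ ℓ. -/

import Mathlib

open Finset

/-- Value in ℝ of a Bernoulli outcome. -/
noncomputable def b2r (b : Bool) : ℝ := if b then 1 else 0

/-- Empirical mean p̂ₖ of the first k samples (0-based: samples x₀, …, x_{k-1}). -/
noncomputable def phat {n : ℕ} (x : Fin n → Bool) (k : ℕ) : ℝ :=
  (k : ℝ)⁻¹ * ∑ j : Fin n, if (j : ℕ) < k ∧ x j = true then (1 : ℝ) else 0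

/-- Parameter used by DBsample at (0-based) step k:
q₀ = p and q_k = clip(p(1+α) - α·p̂ₖ, 0, 1) for k ≥ 1. -/
noncomputable def dbq {n : ℕ} (p α : ℝ) (x : Fin n → Bool) (k : ℕ) : ℝ :=
  if k = 0 then p else min 1 (max 0 (p * (1 + α) - α * phat x k))

/-- Joint density of the n DBsample draws. -/
noncomputable def dbDens {n : ℕ} (p α : ℝ) (x : Fin n → Bool) : ℝ :=
  ∏ k : Fin n, (if x k then dbq p α x (k : ℕ) else 1 - dbq p α x (k : ℕ))

/-- Covariance of the k-th and ℓ-th DBsample draws. -/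
noncomputable def dbCov {n : ℕ} (p α : ℝ) (k l : Fin n) : ℝ :=
  (∑ x : Fin n → Bool, dbDens p α x * (b2r (x k) * b2r (x l)))
    - (∑ x : Fin n → Bool, dbDens p α x * b2r (x k))
      * (∑ x : Fin n → Bool, dbDens p α x * b2r (x l))

-- expectation
noncomputable def Ex {n : ℕ} (p α : ℝ) (f : (Fin n → Bool) → ℝ) : ℝ :=
  ∑ x : Fin n → Bool, dbDens p α x * f x

lemma phat_snoc {n : ℕ} (x : Fin n → Bool) (b : Bool) (k : ℕ) (hk : k ≤ n) :
    phat (Fin.snoc x b) k = phat x k := by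
  unfold phat
  congr 1
  rw [Fin.sum_univ_castSucc]
  have h1 : ¬((Fin.last n : Fin (n+1)) : ℕ) < k := by simp [Fin.last]; omega
  simp only [h1, false_and, if_false, add_zero, Fin.snoc_castSucc, Fin.coe_castSucc]

lemma dbq_snoc {n : ℕ} (p α : ℝ) (x : Fin n → Bool) (b : Bool) (k : ℕ) (hk : k ≤ n) :
    dbq p α (Fin.snoc x b) k = dbq p α x k := by
  unfold dbq
  rcases eq_or_ne k 0 with h | h
  · simp [h]
  · simp [h, phat_snoc x b k hk]

lemma dbDens_snoc {n : ℕ} (p α : ℝ) (x : Fin n → Bool) (b : Bool) :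
    dbDens p α (Fin.snoc x b)
      = dbDens p α x * (if b then dbq p α x n else 1 - dbq p α x n) := by
  unfold dbDens
  rw [Fin.prod_univ_castSucc]
  congr 1
  · exact Finset.prod_congr rfl fun j _ => by
      simp [Fin.snoc_castSucc, dbq_snoc p α x b (j : ℕ) (le_of_lt j.isLt)]
  · simp [Fin.snoc_last, dbq_snoc p α x b n le_rfl]

lemma Ex_snoc {n : ℕ} (p α : ℝ) (f : (Fin (n+1) → Bool) → ℝ) :
    Ex p α f = Ex p α (fun x : Fin n → Bool =>
      dbq p α x n * f (Fin.snoc x true) + (1 - dbq p α x n) * f (Fin.snoc x false)) := by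
  unfold Ex
  rw [← (Fin.snocEquiv (fun _ => Bool)).sum_comp
      (fun y => dbDens p α y * f y), Fintype.sum_prod_type_right]
  refine Finset.sum_congr rfl fun x _ => ?_
  have : ∀ b : Bool, (Fin.snocEquiv (fun _ : Fin (n+1) => Bool)) (b, x) = Fin.snoc x b := by
    intro b; rfl
  rw [Fintype.sum_bool]
  simp only [this, dbDens_snoc, if_true, if_false, Bool.false_eq_true]
  ring

lemma Ex_init {n : ℕ} (p α : ℝ) (g : (Fin n → Bool) → ℝ) :
    Ex p α (fun y : Fin (n+1) → Bool => g (Fin.init y)) = Ex p α g := by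
  rw [Ex_snoc]
  refine Finset.sum_congr rfl fun x _ => ?_
  simp only [Fin.init_snoc]
  ring

lemma Ex_mul_last {n : ℕ} (p α : ℝ) (g : (Fin n → Bool) → ℝ) :
    Ex p α (fun y : Fin (n+1) → Bool => g (Fin.init y) * b2r (y (Fin.last n)))
      = Ex p α (fun x => g x * dbq p α x n) := by
  rw [Ex_snoc]
  refine Finset.sum_congr rfl fun x _ => ?_
  simp only [Fin.init_snoc, Fin.snoc_last, b2r, if_true, Bool.false_eq_true, if_false]
  ring

lemma Ex_add {n : ℕ} (p α : ℝ) (f g : (Fin n → Bool) → ℝ) :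
    Ex p α (fun x => f x + g x) = Ex p α f + Ex p α g := by
  simp [Ex, mul_add, Finset.sum_add_distrib]

lemma Ex_sub {n : ℕ} (p α : ℝ) (f g : (Fin n → Bool) → ℝ) :
    Ex p α (fun x => f x - g x) = Ex p α f - Ex p α g := by
  simp [Ex, mul_sub, Finset.sum_sub_distrib]

lemma Ex_smul {n : ℕ} (p α c : ℝ) (f : (Fin n → Bool) → ℝ) :
    Ex p α (fun x => c * f x) = c * Ex p α f := by
  simp [Ex, Finset.mul_sum]; congr 1; ext x; ring

lemma Ex_sum {n m : ℕ} (p α : ℝ) (F : Fin m → (Fin n → Bool) → ℝ) :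
    Ex p α (fun x => ∑ j : Fin m, F j x) = ∑ j : Fin m, Ex p α (F j) := by
  simp [Ex, Finset.mul_sum]
  exact Finset.sum_comm

lemma Ex_one {n : ℕ} (p α : ℝ) : Ex p α (fun _ : Fin n → Bool => 1) = 1 := by
  induction n with
  | zero => simp [Ex, dbDens]
  | succ n ih =>
      have := Ex_init p α (fun _ : Fin n → Bool => (1:ℝ))
      simpa [ih] using this

lemma Ex_zero_fin (p α : ℝ) (f : (Fin 0 → Bool) → ℝ) :
    Ex p α f = f (fun i => i.elim0) := by
  rw [Ex]
  rw [Finset.sum_eq_single (fun i : Fin 0 => i.elim0)]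
  · simp [dbDens]
  · intro b _ hb; exact absurd (funext fun i => i.elim0) hb
  · intro h; exact absurd (Finset.mem_univ _) h

section bounds
variable {p α : ℝ} (hp0 : 0 < p) (hp1 : p < 1) (hα0 : 0 < α)
  (hα : α ≤ min ((1 - p) / p) (p / (1 - p)))

include hp0 hp1 hα in
lemma alpha_le_one : α ≤ 1 := by
  have h1 : α ≤ (1 - p) / p := le_trans hα (min_le_left _ _)
  have h2 : α ≤ p / (1 - p) := le_trans hα (min_le_right _ _)
  have h1' : α * p ≤ 1 - p := (le_div_iff₀ hp0).mp h1
  have h2' : α * (1 - p) ≤ p := (le_div_iff₀ (by linarith)).mp h2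
  nlinarith

lemma phat_nonneg {n : ℕ} (x : Fin n → Bool) (k : ℕ) : 0 ≤ phat x k := by
  unfold phat
  apply mul_nonneg (by positivity)
  apply Finset.sum_nonneg
  intro j _; split <;> norm_num

lemma phat_le_one {n : ℕ} (x : Fin n → Bool) (k : ℕ) (hk : 0 < k) : phat x k ≤ 1 := by
  unfold phat
  rw [inv_mul_le_iff₀ (by exact_mod_cast hk), mul_one]
  calc (∑ j : Fin n, if (j : ℕ) < k ∧ x j = true then (1:ℝ) else 0)
      ≤ ∑ j : Fin n, (if (j : ℕ) < k then (1:ℝ) else 0) := by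
        apply Finset.sum_le_sum; intro j _
        by_cases h : (j:ℕ) < k ∧ x j = true
        · simp [h, h.1]
        · by_cases h2 : (j:ℕ) < k
          · simp only [h, if_false, h2, if_true]; split <;> norm_num
          · simp [h, h2]
    _ = ∑ j ∈ Finset.range n, (if j < k then (1:ℝ) else 0) := by
        exact Fin.sum_univ_eq_sum_range (fun j => if j < k then (1:ℝ) else 0) n
    _ = ((Finset.range n).filter (· < k)).card := by
        rw [Finset.sum_ite, Finset.sum_const, Finset.sum_const]; simp
    _ ≤ (k : ℝ) := by
        have : (Finset.range n).filter (· < k) ⊆ Finset.range k := by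
          intro a ha; simp at ha ⊢; omega
        have := Finset.card_le_card this
        simp at this
        exact_mod_cast this

include hp0 hp1 hα0 hα in
lemma dbq_noclip {n : ℕ} (x : Fin n → Bool) (k : ℕ) (hk : 0 < k) :
    dbq p α x k = p * (1 + α) - α * phat x k := by
  have h1 : α ≤ (1 - p) / p := le_trans hα (min_le_left _ _)
  have h2 : α ≤ p / (1 - p) := le_trans hα (min_le_right _ _)
  have h1' : α * p ≤ 1 - p := (le_div_iff₀ hp0).mp h1
  have h2' : α * (1 - p) ≤ p := (le_div_iff₀ (by linarith)).mp h2
  have hub : p * (1 + α) - α * phat x k ≤ 1 := by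
    have := phat_nonneg x k
    nlinarith
  have hlb : 0 ≤ p * (1 + α) - α * phat x k := by
    have := phat_le_one x k hk
    nlinarith
  unfold dbq
  rw [if_neg (by omega), max_eq_right hlb, min_eq_right hub]

lemma phat_self {n : ℕ} (x : Fin n → Bool) :
    phat x n = (n : ℝ)⁻¹ * ∑ j : Fin n, b2r (x j) := by
  unfold phat b2r
  congr 1
  refine Finset.sum_congr rfl fun j _ => ?_
  simp [j.isLt]

end bounds

noncomputable def Mo (p α : ℝ) (n : ℕ) (k : Fin n) : ℝ := Ex p α fun x => b2r (x k)
noncomputable def P2 (p α : ℝ) (n : ℕ) (k l : Fin n) : ℝ :=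
  Ex p α fun x => b2r (x k) * b2r (x l)

lemma Mo_castSucc (p α : ℝ) (n : ℕ) (k : Fin n) :
    Mo p α (n+1) k.castSucc = Mo p α n k :=
  Ex_init p α (fun x : Fin n → Bool => b2r (x k))

lemma P2_castSucc (p α : ℝ) (n : ℕ) (k l : Fin n) :
    P2 p α (n+1) k.castSucc l.castSucc = P2 p α n k l :=
  Ex_init p α (fun x : Fin n → Bool => b2r (x k) * b2r (x l))

lemma P2_comm (p α : ℝ) (n : ℕ) (k l : Fin n) : P2 p α n k l = P2 p α n l k := by
  unfold P2; congr 1; ext x; ring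

lemma b2r_sq (b : Bool) : b2r b * b2r b = b2r b := by cases b <;> simp [b2r]

lemma P2_diag (p α : ℝ) (n : ℕ) (k : Fin n) : P2 p α n k k = Mo p α n k := by
  unfold P2 Mo; congr 1; ext x; rw [b2r_sq]

lemma Mo_last (p α : ℝ) (n : ℕ) :
    Mo p α (n+1) (Fin.last n) = Ex p α (fun x : Fin n → Bool => dbq p α x n) := by
  have h := Ex_mul_last p α (fun _ : Fin n → Bool => (1:ℝ))
  simpa [one_mul, Mo] using h

lemma P2_last_raw (p α : ℝ) (n : ℕ) (k : Fin n) :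
    P2 p α (n+1) k.castSucc (Fin.last n)
      = Ex p α (fun x : Fin n → Bool => b2r (x k) * dbq p α x n) :=
  Ex_mul_last p α (fun x : Fin n → Bool => b2r (x k))

section withhyp
variable {p α : ℝ} (hp0 : 0 < p) (hp1 : p < 1) (hα0 : 0 < α)
  (hα : α ≤ min ((1 - p) / p) (p / (1 - p)))

include hp0 hp1 hα0 hα in
lemma Ex_mul_dbq {n : ℕ} (hn : 0 < n) (g : (Fin n → Bool) → ℝ) :
    Ex p α (fun x : Fin n → Bool => g x * dbq p α x n)
      = p * (1 + α) * Ex p α g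
        - α * (n:ℝ)⁻¹ * ∑ j : Fin n, Ex p α (fun x => g x * b2r (x j)) := by
  have hpt : ∀ x : Fin n → Bool, g x * dbq p α x n
      = (p * (1 + α)) * g x - (α * (n:ℝ)⁻¹) * ∑ j : Fin n, g x * b2r (x j) := by
    intro x
    rw [dbq_noclip hp0 hp1 hα0 hα x n hn, phat_self, ← Finset.mul_sum]
    ring
  calc Ex p α (fun x : Fin n → Bool => g x * dbq p α x n)
      = Ex p α (fun x => (p * (1 + α)) * g x
          - (α * (n:ℝ)⁻¹) * ∑ j : Fin n, g x * b2r (x j)) := by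
        congr 1; ext x; exact hpt x
    _ = _ := by
        rw [Ex_sub, Ex_smul, Ex_smul, Ex_sum]

include hp0 hp1 hα0 hα in
lemma Mo_eq_p : ∀ (n : ℕ) (k : Fin n), Mo p α n k = p := by
  intro n
  induction n with
  | zero => exact fun k => k.elim0
  | succ n ih =>
      intro k
      induction k using Fin.lastCases with
      | cast k => rw [Mo_castSucc]; exact ih k
      | last =>
          rw [Mo_last]
          rcases Nat.eq_zero_or_pos n with h | h
          · subst h
            rw [Ex_zero_fin]
            simp [dbq]
          · have := Ex_mul_dbq hp0 hp1 hα0 hα h (fun _ => (1:ℝ))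
            simp only [one_mul] at this
            rw [this, Ex_one]
            have : ∀ j : Fin n, Ex p α (fun x => b2r (x j)) = p := fun j => ih j
            rw [Finset.sum_congr rfl fun j _ => this j, Finset.sum_const]
            have hn : (n:ℝ) ≠ 0 := Nat.cast_ne_zero.mpr h.ne'
            field_simp
            rw [Finset.card_univ, Fintype.card_fin]
            ring

include hp0 hp1 hα0 hα in
lemma P2_last {n : ℕ} (hn : 0 < n) (k : Fin n) :
    P2 p α (n+1) k.castSucc (Fin.last n)
      = p * (1 + α) * p - α * (n:ℝ)⁻¹ * ∑ j : Fin n, P2 p α n k j := by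
  rw [P2_last_raw, Ex_mul_dbq hp0 hp1 hα0 hα hn]
  rw [show Ex p α (fun x : Fin n → Bool => b2r (x k)) = p from Mo_eq_p hp0 hp1 hα0 hα n k]
  rfl

end withhyp

section main
variable {p α : ℝ} (hp0 : 0 < p) (hp1 : p < 1) (hα0 : 0 < α)
  (hα : α ≤ min ((1 - p) / p) (p / (1 - p)))

include hp0 hp1 hα0 hα in
lemma key : ∀ n : ℕ,
    (∀ k l : Fin n, k ≠ l → P2 p α n k l ≤ p^2)
      ∧ (∀ k : Fin n, 0 ≤ (∑ j : Fin n, P2 p α n k j) - n * p^2) := by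
  have hα1 : α ≤ 1 := alpha_le_one hp0 hp1 hα
  intro n
  induction n with
  | zero => exact ⟨fun k => k.elim0, fun k => k.elim0⟩
  | succ n ih =>
      obtain ⟨ihA, ihB⟩ := ih
      rcases Nat.eq_zero_or_pos n with hn | hn
      · subst hn
        constructor
        · intro k l hkl
          have h1 := k.isLt; have h2 := l.isLt
          exact absurd (Fin.ext (by omega)) hkl
        · intro k
          have hk : k = 0 := Fin.ext (by have := k.isLt; omega)
          subst hk
          rw [Fin.sum_univ_one, P2_diag, Mo_eq_p hp0 hp1 hα0 hα]
          push_cast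
          nlinarith
      have hnR : (0:ℝ) < n := by exact_mod_cast hn
      have hninv : (n:ℝ)⁻¹ * n = 1 := inv_mul_cancel₀ hnR.ne'
      have hinvpos : (0:ℝ) < (n:ℝ)⁻¹ := by positivity
      have hinvle : (n:ℝ)⁻¹ ≤ 1 := by
        rw [inv_le_one₀ hnR]; exact_mod_cast hn
      have hcoef : 0 ≤ 1 - α * (n:ℝ)⁻¹ := by nlinarith
      -- covariance with last coordinate
      have hlast : ∀ k : Fin n,
          P2 p α (n+1) k.castSucc (Fin.last n)
            = p^2 - α * (n:ℝ)⁻¹ * ((∑ j : Fin n, P2 p α n k j) - n * p^2) := by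
        intro k
        rw [P2_last hp0 hp1 hα0 hα hn k]
        field_simp
        ring
      have hlast_le : ∀ k : Fin n,
          P2 p α (n+1) k.castSucc (Fin.last n) ≤ p^2 := by
        intro k
        rw [hlast k]
        have h1 := ihB k
        nlinarith [mul_nonneg (le_of_lt (mul_pos hα0 hinvpos)) h1]
      have partA : ∀ k l : Fin (n+1), k ≠ l → P2 p α (n+1) k l ≤ p^2 := by
        intro k l hkl
        induction l using Fin.lastCases with
        | last =>
            induction k using Fin.lastCases with
            | last => exact absurd rfl hkl
            | cast k => exact hlast_le k
        | cast l =>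
            induction k using Fin.lastCases with
            | last => rw [P2_comm]; exact hlast_le l
            | cast k =>
                rw [P2_castSucc]
                exact ihA k l (fun h => hkl (by rw [h]))
      refine ⟨partA, ?_⟩
      intro k
      induction k using Fin.lastCases with
      | cast k =>
          rw [Fin.sum_univ_castSucc]
          have hsum : ∑ j : Fin n, P2 p α (n+1) k.castSucc j.castSucc
              = ∑ j : Fin n, P2 p α n k j :=
            Finset.sum_congr rfl fun j _ => P2_castSucc p α n k j
          rw [hsum, hlast k]
          have h1 := ihB k
          push_cast
          nlinarith [mul_nonneg h1 hcoef]
      | last =>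
          rw [Fin.sum_univ_castSucc, P2_diag, Mo_eq_p hp0 hp1 hα0 hα]
          have hsum : ∑ j : Fin n, P2 p α (n+1) (Fin.last n) j.castSucc
              = ∑ j : Fin n, (p^2 - α * (n:ℝ)⁻¹ * ((∑ i : Fin n, P2 p α n j i) - n * p^2)) := by
            refine Finset.sum_congr rfl fun j _ => ?_
            rw [← hlast j, P2_comm]
          rw [hsum]
          have hT : ∀ j : Fin n, ((∑ i : Fin n, P2 p α n j i) - (n:ℝ) * p^2) ≤ p - p^2 := by
            intro j
            have hbound : ∑ i : Fin n, P2 p α n j i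
                ≤ ∑ i : Fin n, (if i = j then p else p^2) := by
              refine Finset.sum_le_sum fun i _ => ?_
              by_cases h : i = j
              · subst h; rw [P2_diag, Mo_eq_p hp0 hp1 hα0 hα]; simp
              · simp only [h, if_false]
                exact ihA j i (fun hh => h hh.symm)
            have hsplit : ∑ i : Fin n, (if i = j then p else p^2)
                = (n:ℝ) * p^2 + (p - p^2) := by
              have hptw : ∀ i : Fin n, (if i = j then p else p^2)
                  = p^2 + (if i = j then p - p^2 else 0) := by
                intro i; split <;> ring
              rw [Finset.sum_congr rfl fun i _ => hptw i, Finset.sum_add_distrib,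
                Finset.sum_const, Finset.sum_ite_eq' Finset.univ j (fun _ => p - p^2)]
              simp [Finset.card_univ, nsmul_eq_mul]
            linarith [hbound.trans_eq hsplit]
          rw [Finset.sum_sub_distrib, Finset.sum_const, Finset.card_univ]
          have hT2 : ∑ j : Fin n, α * (n:ℝ)⁻¹ * ((∑ i : Fin n, P2 p α n j i) - (n:ℝ) * p^2)
              ≤ α * (n:ℝ)⁻¹ * ((n:ℝ) * (p - p^2)) := by
            rw [← Finset.mul_sum]
            refine mul_le_mul_of_nonneg_left ?_ (by positivity)
            calc ∑ j : Fin n, ((∑ i : Fin n, P2 p α n j i) - (n:ℝ) * p^2)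
                ≤ ∑ j : Fin n, (p - p^2) := Finset.sum_le_sum fun j _ => hT j
              _ = (n:ℝ) * (p - p^2) := by
                  rw [Finset.sum_const, Finset.card_univ]
                  simp [nsmul_eq_mul]
          have hsimp : α * (n:ℝ)⁻¹ * ((n:ℝ) * (p - p^2)) = α * (p - p^2) := by
            field_simp
          rw [hsimp] at hT2
          simp only [Fintype.card_fin, nsmul_eq_mul]
          push_cast
          nlinarith [hT2, mul_nonneg (by nlinarith : (0:ℝ) ≤ p - p^2)
            (by linarith : (0:ℝ) ≤ 1 - α)]
end main

/-- nonpositive pairwise covariances in DBsample: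
Cov(z_k, z_ℓ) ≤ 0 for all k ≠ ℓ, when 0 < α ≤ min((1-p)/p, p/(1-p)). -/
theorem dbsample_nonpositive_covariances (p α : ℝ) (hp0 : 0 < p) (hp1 : p < 1)
    (hα0 : 0 < α) (hα : α ≤ min ((1 - p) / p) (p / (1 - p)))
    (n : ℕ) (k l : Fin n) (hkl : k ≠ l) :
    dbCov p α k l ≤ 0 := by
  have hdef : dbCov p α k l = P2 p α n k l - Mo p α n k * Mo p α n l := rfl
  rw [hdef, Mo_eq_p hp0 hp1 hα0 hα, Mo_eq_p hp0 hp1 hα0 hα]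
  have := (key hp0 hp1 hα0 hα n).1 k l hkl
  nlinarith
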